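/- Fix integers N ≥ 3 and M ≥ 3 and real coefficients f^c_{n,m}, f^s_{n,m}. Let F : ℝ × ℝ → ℝ be the partial-regularity DFS expansion, F(φ,θ) = Σ_{m=0}^{M} f_m^{c,N}(θ) cos(mφ) + Σ_{m=1}^{M} f_m^{s,N}(θ) sin(mφ), where f_0^{c,N}(θ) = Σ_{n=0}^{N} f^c_{n,0} cos(nθ); f_1^{c(s),N}(θ) = Σ_{n=0}^{N−1} f^{c(s)}_{n,1} sin(θ) cos(nθ); for even m ≥ 2, f_m^{c(s),N}(θ) = Σ_{n=1}^{N−1} f^{c(s)}_{n,m} sin(θ) sin(nθ); and for odd m ≥ 3, f_m^{c(s),N}(θ) = Σ_{n=1}^{N−2} f^{c(s)}_{n,m} sin²(θ) sin(nθ). Then for all φ, θ ∈ ℝ: F(φ + π, −θ) = F(φ, θ) and F(φ + 2π, θ) = F(φ, θ). -/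

import Mathlib

open scoped BigOperators Real

noncomputable section

/-- The latitudinal component `f_m^{N}(θ)` of the partial-regularity DFS expansion,
built from coefficients `f n m`. -/
def dfsLat (N : ℕ) (f : ℕ → ℕ → ℝ) (m : ℕ) (θ : ℝ) : ℝ :=
  if m = 0 then ∑ n ∈ Finset.range (N + 1), f n 0 * Real.cos ((n : ℝ) * θ)
  else if m = 1 then ∑ n ∈ Finset.range N, f n 1 * (Real.sin θ * Real.cos ((n : ℝ) * θ))
  else if m % 2 = 0 then
    ∑ n ∈ Finset.Icc 1 (N - 1), f n m * (Real.sin θ * Real.sin ((n : ℝ) * θ))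
  else ∑ n ∈ Finset.Icc 1 (N - 2), f n m * (Real.sin θ ^ 2 * Real.sin ((n : ℝ) * θ))

/-- The partial-regularity DFS expansion
`F(φ,θ) = Σ_{m=0}^{M} f_m^{c,N}(θ) cos(mφ) + Σ_{m=1}^{M} f_m^{s,N}(θ) sin(mφ)`. -/
def dfsF (N M : ℕ) (fc fs : ℕ → ℕ → ℝ) (φ θ : ℝ) : ℝ :=
  ∑ m ∈ Finset.range (M + 1), dfsLat N fc m θ * Real.cos ((m : ℝ) * φ) +
    ∑ m ∈ Finset.Icc 1 M, dfsLat N fs m θ * Real.sin ((m : ℝ) * φ)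

end

lemma cos_nmul_pi (n : ℕ) : Real.cos ((n : ℝ) * Real.pi) = (-1) ^ n := by
  simpa using Real.cos_nat_mul_pi_sub 0 n

lemma cos_nmul_add_pi (n : ℕ) (φ : ℝ) :
    Real.cos ((n : ℝ) * (φ + Real.pi)) = (-1) ^ n * Real.cos ((n : ℝ) * φ) := by
  rw [mul_add, Real.cos_add, cos_nmul_pi, Real.sin_nat_mul_pi]
  ring

lemma sin_nmul_add_pi (n : ℕ) (φ : ℝ) :
    Real.sin ((n : ℝ) * (φ + Real.pi)) = (-1) ^ n * Real.sin ((n : ℝ) * φ) := by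
  rw [mul_add, Real.sin_add, cos_nmul_pi, Real.sin_nat_mul_pi]
  ring

lemma cos_nmul_add_two_pi (n : ℕ) (φ : ℝ) :
    Real.cos ((n : ℝ) * (φ + 2 * Real.pi)) = Real.cos ((n : ℝ) * φ) := by
  have : (n : ℝ) * (φ + 2 * Real.pi) = (n : ℝ) * φ + (n : ℤ) * (2 * Real.pi) := by
    push_cast; ring
  rw [this, Real.cos_add_int_mul_two_pi]

lemma sin_nmul_add_two_pi (n : ℕ) (φ : ℝ) :
    Real.sin ((n : ℝ) * (φ + 2 * Real.pi)) = Real.sin ((n : ℝ) * φ) := by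
  have : (n : ℝ) * (φ + 2 * Real.pi) = (n : ℝ) * φ + (n : ℤ) * (2 * Real.pi) := by
    push_cast; ring
  rw [this, Real.sin_add_int_mul_two_pi]

lemma dfsLat_neg (N : ℕ) (f : ℕ → ℕ → ℝ) (m : ℕ) (θ : ℝ) :
    dfsLat N f m (-θ) = (-1) ^ m * dfsLat N f m θ := by
  unfold dfsLat
  by_cases h0 : m = 0
  · rw [if_pos h0, if_pos h0]
    subst h0
    simp [mul_neg, Real.cos_neg]
  rw [if_neg h0, if_neg h0]
  by_cases h1 : m = 1
  · rw [if_pos h1, if_pos h1]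
    subst h1
    rw [pow_one, neg_one_mul, ← Finset.sum_neg_distrib]
    refine Finset.sum_congr rfl fun n _ => ?_
    simp only [mul_neg, Real.sin_neg, Real.cos_neg]
    ring
  rw [if_neg h1, if_neg h1]
  by_cases h2 : m % 2 = 0
  · rw [if_pos h2, if_pos h2]
    have h : (-1 : ℝ) ^ m = 1 := Even.neg_one_pow (Nat.even_iff.mpr h2)
    rw [h, one_mul]
    refine Finset.sum_congr rfl fun n _ => ?_
    simp only [mul_neg, Real.sin_neg]
    ring
  · rw [if_neg h2, if_neg h2]
    have h : (-1 : ℝ) ^ m = -1 := Odd.neg_one_pow (Nat.odd_iff.mpr (Nat.mod_two_ne_zero.mp h2))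
    rw [h, neg_one_mul, ← Finset.sum_neg_distrib]
    refine Finset.sum_congr rfl fun n _ => ?_
    simp only [mul_neg, Real.sin_neg]
    ring

set_option maxHeartbeats 800000 in
theorem dfsF_glide_reflection_and_periodic
    (N M : ℕ) (hN : 3 ≤ N) (hM : 3 ≤ M) (fc fs : ℕ → ℕ → ℝ) :
    ∀ φ θ : ℝ,
      dfsF N M fc fs (φ + Real.pi) (-θ) = dfsF N M fc fs φ θ ∧
      dfsF N M fc fs (φ + 2 * Real.pi) θ = dfsF N M fc fs φ θ := by
  intro φ θ
  constructor
  · unfold dfsF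
    congr 1
    · apply Finset.sum_congr rfl
      intro m _
      rw [dfsLat_neg, cos_nmul_add_pi]
      have h : ((-1 : ℝ) ^ m) * (-1) ^ m = 1 := by
        rw [← pow_add]
        exact Even.neg_one_pow ⟨m, by ring⟩
      linear_combination (dfsLat N fc m θ * Real.cos ((m : ℝ) * φ)) * h
    · apply Finset.sum_congr rfl
      intro m _
      rw [dfsLat_neg, sin_nmul_add_pi]
      have h : ((-1 : ℝ) ^ m) * (-1) ^ m = 1 := by
        rw [← pow_add]
        exact Even.neg_one_pow ⟨m, by ring⟩
      linear_combination (dfsLat N fs m θ * Real.sin ((m : ℝ) * φ)) * h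
  · unfold dfsF
    congr 1
    · apply Finset.sum_congr rfl
      intro m _
      rw [cos_nmul_add_two_pi]
    · apply Finset.sum_congr rfl
      intro m _
      rw [sin_nmul_add_two_pi]
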